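/- arXiv:2506.02985 — 4 statements merged into one kernel-verified Lean document; each statement's English description precedes it below -/
import Mathlib

section
/- For integers n ≥ 1, 0 ≤ t ≤ n-2, and 1 ≤ m ≤ n-t-1, the number of inversion sequences of length n avoiding 102, 201, and 101 with rank t and maximum value m equals ((t+1)/(m+t+1)) · C(2m+t, m) · C(n-t-2, m-1). -/
/-- An inversion sequence of length `n`, 1-indexed: `0 ≤ e i ≤ i - 1` for `1 ≤ i ≤ n`,
normalized to be `0` outside `[1, n]`. -/
def IsInvSeq (n : ℕ) (e : ℕ → ℕ) : Prop :=
  e 0 = 0 ∧ (∀ i, 1 ≤ i → i ≤ n → e i < i) ∧ ∀ i, n < i → e i = 0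

/-- `e` contains a length-3 pattern described by the relation `P` on values. -/
def Contains (n : ℕ) (P : ℕ → ℕ → ℕ → Prop) (e : ℕ → ℕ) : Prop :=
  ∃ i j k, 1 ≤ i ∧ i < j ∧ j < k ∧ k ≤ n ∧ P (e i) (e j) (e k)

def Pat102 (a b c : ℕ) : Prop := b < a ∧ a < c
def Pat001 (a b c : ℕ) : Prop := a = b ∧ b < c
def Pat011 (a b c : ℕ) : Prop := a < b ∧ b = c
def Pat012 (a b c : ℕ) : Prop := a < b ∧ b < c
def Pat021 (a b c : ℕ) : Prop := a < c ∧ c < b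
def Pat110 (a b c : ℕ) : Prop := a = b ∧ c < b
def Pat120 (a b c : ℕ) : Prop := c < a ∧ a < b
def Pat201 (a b c : ℕ) : Prop := b < c ∧ c < a
def Pat210 (a b c : ℕ) : Prop := c < b ∧ b < a
def Pat101 (a b c : ℕ) : Prop := a = c ∧ b < a

/-- `p` is the position of the first descent of `e` (with convention `e (n+1) = -1`,
i.e. there is always a descent at position `n`). -/
def PrMax (n : ℕ) (e : ℕ → ℕ) (p : ℕ) : Prop :=
  1 ≤ p ∧ p ≤ n ∧ (∀ i, 1 ≤ i → i < p → e i ≤ e (i + 1)) ∧ (p = n ∨ e (p + 1) < e p)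

/-- `e` has rank `t`, i.e. `t = prmax e - max e - 1`. -/
def HasRank (n : ℕ) (e : ℕ → ℕ) (t : ℕ) : Prop :=
  ∃ p, PrMax n e p ∧ p = e p + t + 1

/-- `m` is the maximum value of `e` on `[1, n]`. -/
def IsMaxVal (n : ℕ) (e : ℕ → ℕ) (m : ℕ) : Prop :=
  (∀ i, 1 ≤ i → i ≤ n → e i ≤ m) ∧ ∃ i, 1 ≤ i ∧ i ≤ n ∧ e i = m


namespace Stmt12Aux

/-- weakly increasing staircase sequences of width `k`, values ≤ M, zero-padded -/
def DS (M k : ℕ) : Set (ℕ → ℕ) :=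
  {f | (∀ i j, i ≤ j → j < k → f i ≤ f j) ∧ (∀ i, i < k → f i ≤ i) ∧
       (∀ i, i < k → f i ≤ M) ∧ (∀ i, k ≤ i → f i = 0)}

/-- weakly decreasing sequences of width `k`, values ≤ M, zero-padded -/
def ES (M k : ℕ) : Set (ℕ → ℕ) :=
  {f | (∀ i j, i ≤ j → j < k → f j ≤ f i) ∧ (∀ i, i < k → f i ≤ M) ∧ (∀ i, k ≤ i → f i = 0)}

lemma finite_aux {k M : ℕ} {s : Set (ℕ → ℕ)}
    (hb : ∀ f ∈ s, ∀ i, i < k → f i ≤ M) (hp : ∀ f ∈ s, ∀ i, k ≤ i → f i = 0) :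
    s.Finite := by
  have hinj : Set.InjOn (fun (f : ℕ → ℕ) => fun (i : Fin k) => f i) s := by
    intro f hf g hg h
    funext i
    rcases lt_or_ge i k with hi | hi
    · simpa using congrFun h ⟨i, hi⟩
    · rw [hp f hf i hi, hp g hg i hi]
  have hfin : {h : Fin k → ℕ | ∀ i, h i ≤ M}.Finite := by
    have : {h : Fin k → ℕ | ∀ i, h i ≤ M} = Set.univ.pi (fun _ : Fin k => Set.Iic M) := by
      ext h; simp only [Set.mem_setOf_eq, Set.mem_pi, Set.mem_univ, Set.mem_Iic, true_implies]
    rw [this]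
    exact Set.Finite.pi fun _ => Set.finite_Iic M
  refine Set.Finite.of_finite_image (hfin.subset ?_) hinj
  rintro x ⟨f, hf, rfl⟩
  intro i
  exact hb f hf i i.isLt

lemma DS_finite (M k : ℕ) : (DS M k).Finite :=
  finite_aux (fun f hf => hf.2.2.1) (fun f hf => hf.2.2.2)

lemma ES_finite (M k : ℕ) : (ES M k).Finite :=
  finite_aux (fun f hf => hf.2.1) (fun f hf => hf.2.2)

lemma ES_zero (k : ℕ) : ES 0 k = {fun _ => 0} := by
  ext f
  simp only [ES, Set.mem_setOf_eq, Set.mem_singleton_iff]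
  constructor
  · rintro ⟨-, h2, h3⟩
    funext i
    rcases lt_or_ge i k with hi | hi
    · exact Nat.le_zero.mp (h2 i hi)
    · exact h3 i hi
  · rintro rfl
    exact ⟨fun _ _ _ _ => le_rfl, fun _ _ => le_rfl, fun _ _ => rfl⟩

lemma ES_width_zero (M : ℕ) : ES M 0 = {fun _ => 0} := by
  ext f
  simp only [ES, Set.mem_setOf_eq, Set.mem_singleton_iff]
  constructor
  · rintro ⟨-, -, h3⟩
    funext i; exact h3 i (Nat.zero_le _)
  · rintro rfl
    exact ⟨fun _ _ _ h => by omega, fun _ h => by omega, fun _ _ => rfl⟩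

lemma ES_card : ∀ k M, (ES M k).ncard = (k + M).choose k := by
  intro k
  induction k with
  | zero =>
    intro M
    rw [ES_width_zero, Set.ncard_singleton]
    simp
  | succ k ihk =>
    intro M
    induction M with
    | zero =>
      rw [ES_zero, Set.ncard_singleton]
      simp
    | succ M ihM =>
      -- split
      classical
      set s₂ : Set (ℕ → ℕ) := {f ∈ ES (M+1) (k+1) | f 0 = M+1} with hs₂
      have hsplit : ES (M+1) (k+1) = ES M (k+1) ∪ s₂ := by
        ext f
        constructor
        · intro hf
          rcases Nat.lt_or_ge (f 0) (M+1) with h0 | h0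
          · left
            refine ⟨hf.1, fun i hi => ?_, hf.2.2⟩
            have := hf.1 0 i (Nat.zero_le _) hi
            omega
          · right
            refine ⟨hf, ?_⟩
            have := hf.2.1 0 (by omega)
            omega
        · rintro (⟨h1, h2, h3⟩ | ⟨hf, -⟩)
          · exact ⟨h1, fun i hi => by have := h2 i hi; omega, h3⟩
          · exact hf
      have hdisj : Disjoint (ES M (k+1)) s₂ := by
        rw [Set.disjoint_left]
        rintro f ⟨-, h2, -⟩ ⟨-, h0⟩
        have := h2 0 (by omega)
        omega
      have himg : s₂ = (fun g => fun i => if i = 0 then M+1 else g (i-1)) '' ES (M+1) k := by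
        ext f
        constructor
        · rintro ⟨⟨h1, h2, h3⟩, h0⟩
          refine ⟨fun i => f (i+1), ⟨?_, ?_, ?_⟩, ?_⟩
          · intro i j hij hj
            exact h1 (i+1) (j+1) (by omega) (by omega)
          · intro i hi
            exact h2 (i+1) (by omega)
          · intro i hi
            exact h3 (i+1) (by omega)
          · funext i
            by_cases hi : i = 0
            · subst hi; simp [h0]
            · simp only [if_neg hi]
              congr 1
              omega
        · rintro ⟨g, ⟨h1, h2, h3⟩, rfl⟩
          refine ⟨⟨?_, ?_, ?_⟩, by simp⟩
          · intro i j hij hj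
            by_cases hi : i = 0
            · subst hi
              simp only [if_pos rfl]
              by_cases hj0 : j = 0
              · simp [hj0]
              · simp only [if_neg hj0]
                rcases Nat.lt_or_ge (j-1) k with hjk | hjk
                · exact h2 (j-1) hjk
                · rw [h3 (j-1) hjk]; omega
            · have hj0 : j ≠ 0 := by omega
              simp only [if_neg hi, if_neg hj0]
              exact h1 (i-1) (j-1) (by omega) (by omega)
          · intro i hi
            by_cases hi0 : i = 0
            · simp [hi0]
            · simp only [if_neg hi0]
              exact h2 (i-1) (by omega)
          · intro i hi
            have hi0 : i ≠ 0 := by omega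
            simp only [if_neg hi0]
            exact h3 (i-1) (by omega)
      have hinj : Set.InjOn (fun g => fun i => if i = 0 then M+1 else g (i-1)) (ES (M+1) k) := by
        intro g hg g' hg' h
        funext i
        have := congrFun h (i+1)
        simpa using this
      have hcard : (ES (M+1) (k+1)).ncard = (ES M (k+1)).ncard + (ES (M+1) k).ncard := by
        rw [hsplit, Set.ncard_union_eq hdisj (ES_finite _ _)
          ((ES_finite (M+1) (k+1)).subset (by rw [hs₂]; exact fun f hf => hf.1)),
          himg, Set.ncard_image_of_injOn hinj]
      rw [hcard, ihM, ihk (M+1)]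
      have p1 : (k + 1 + M) = (k + M + 1) := by omega
      have p2 : (k + (M + 1)) = (k + M + 1) := by omega
      have p3 : (k + 1 + (M + 1)) = (k + M + 1) + 1 := by omega
      have q1 : ((k+M+1)+1).choose (k+1) = (k+M+1).choose k + (k+M+1).choose (k+1) :=
        Nat.choose_succ_succ' _ _
      have q2 : (k+M+1).choose (k+1) = (k+M).choose k + (k+M).choose (k+1) := by
        have := Nat.choose_succ_succ' (k+M) k
        simpa using this
      rw [p1, p2, p3]
      omega


lemma DS_zero (k : ℕ) : DS 0 k = {fun _ => 0} := by
  ext f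
  simp only [DS, Set.mem_setOf_eq, Set.mem_singleton_iff]
  constructor
  · rintro ⟨-, -, h3, h4⟩
    funext i
    rcases lt_or_ge i k with hi | hi
    · exact Nat.le_zero.mp (h3 i hi)
    · exact h4 i hi
  · rintro rfl
    exact ⟨fun _ _ _ _ => le_rfl, fun _ _ => Nat.zero_le _, fun _ _ => le_rfl, fun _ _ => rfl⟩

lemma DS_width_zero (M : ℕ) : DS M 0 = {fun _ => 0} := by
  ext f
  simp only [DS, Set.mem_setOf_eq, Set.mem_singleton_iff]
  constructor
  · rintro ⟨-, -, -, h4⟩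
    funext i; exact h4 i (Nat.zero_le _)
  · rintro rfl
    exact ⟨fun _ _ _ h => by omega, fun _ h => by omega, fun _ h => by omega, fun _ _ => rfl⟩

lemma DS_card : ∀ k M, M ≤ k → (DS M k).ncard + (k + M - 1).choose (k+1) = (k + M - 1).choose M := by
  intro k
  induction k with
  | zero =>
    intro M hM
    have : M = 0 := Nat.le_zero.mp hM
    subst this
    rw [DS_width_zero, Set.ncard_singleton]
    simp
  | succ k ihk =>
    intro M
    induction M with
    | zero =>
      intro _
      rw [DS_zero, Set.ncard_singleton, Nat.choose_eq_zero_of_lt (by omega)]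
      simp
    | succ M ihM =>
      intro h
      by_cases hMk : M + 1 ≤ k
      · -- split on whether the last value is M+1
        classical
        set s₂ : Set (ℕ → ℕ) := {f ∈ DS (M+1) (k+1) | f k = M+1} with hs₂
        have hsplit : DS (M+1) (k+1) = DS M (k+1) ∪ s₂ := by
          ext f
          constructor
          · intro hf
            rcases Nat.lt_or_ge (f k) (M+1) with h0 | h0
            · left
              refine ⟨hf.1, hf.2.1, fun i hi => ?_, hf.2.2.2⟩
              have := hf.1 i k (by omega) (by omega)
              omega
            · right
              refine ⟨hf, ?_⟩
              have := hf.2.2.1 k (by omega)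
              omega
          · rintro (⟨h1, h2, h3, h4⟩ | ⟨hf, -⟩)
            · exact ⟨h1, h2, fun i hi => by have := h3 i hi; omega, h4⟩
            · exact hf
        have hdisj : Disjoint (DS M (k+1)) s₂ := by
          rw [Set.disjoint_left]
          rintro f ⟨-, -, h3, -⟩ ⟨-, h0⟩
          have := h3 k (by omega)
          omega
        have himg : s₂ = (fun g => fun i => if i = k then M+1 else g i) '' DS (M+1) k := by
          ext f
          constructor
          · rintro ⟨⟨h1, h2, h3, h4⟩, h0⟩
            refine ⟨fun i => if i = k then 0 else f i, ⟨?_, ?_, ?_, ?_⟩, ?_⟩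
            · intro i j hij hj
              dsimp only
              rw [if_neg (by omega), if_neg (by omega)]
              exact h1 i j hij (by omega)
            · intro i hi
              dsimp only
              rw [if_neg (by omega)]
              exact h2 i (by omega)
            · intro i hi
              dsimp only
              rw [if_neg (by omega)]
              exact h3 i (by omega)
            · intro i hi
              dsimp only
              by_cases hik : i = k
              · rw [if_pos hik]
              · rw [if_neg hik]
                exact h4 i (by omega)
            · funext i
              dsimp only
              by_cases hik : i = k
              · subst hik; simp [h0]
              · simp [hik]
          · rintro ⟨g, ⟨h1, h2, h3, h4⟩, rfl⟩
            refine ⟨⟨?_, ?_, ?_, ?_⟩, by simp⟩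
            · intro i j hij hj
              dsimp only
              by_cases hjk : j = k
              · rw [if_pos hjk]
                by_cases hik : i = k
                · rw [if_pos hik]
                · rw [if_neg hik]
                  rcases Nat.lt_or_ge i k with hik' | hik'
                  · exact h3 i hik'
                  · rw [h4 i hik']; omega
              · rw [if_neg hjk, if_neg (by omega)]
                exact h1 i j hij (by omega)
            · intro i hi
              dsimp only
              by_cases hik : i = k
              · rw [if_pos hik]; omega
              · rw [if_neg hik]
                exact h2 i (by omega)
            · intro i hi
              dsimp only
              by_cases hik : i = k
              · rw [if_pos hik]
              · rw [if_neg hik]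
                exact h3 i (by omega)
            · intro i hi
              dsimp only
              rw [if_neg (by omega)]
              exact h4 i (by omega)
        have hinj : Set.InjOn (fun g => fun i => if i = k then M+1 else g i) (DS (M+1) k) := by
          intro g hg g' hg' hgg
          funext i
          by_cases hik : i = k
          · rw [hik, hg.2.2.2 k le_rfl, hg'.2.2.2 k le_rfl]
          · have := congrFun hgg i
            simpa [hik] using this
        have hcard : (DS (M+1) (k+1)).ncard = (DS M (k+1)).ncard + (DS (M+1) k).ncard := by
          rw [hsplit, Set.ncard_union_eq hdisj (DS_finite _ _)
            ((DS_finite (M+1) (k+1)).subset (by rw [hs₂]; exact fun f hf => hf.1)),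
            himg, Set.ncard_image_of_injOn hinj]
        have i1 := ihM (by omega)
        have i2 := ihk (M+1) hMk
        rw [show k + 1 + M - 1 = k + M by omega] at i1
        rw [show k + (M+1) - 1 = k + M by omega, show k + 1 = (k+1) by rfl] at i2
        rw [show k + 1 + (M+1) - 1 = k + M + 1 by omega, hcard]
        have q1 : (k+M+1).choose (k+1+1) = (k+M).choose (k+1) + (k+M).choose (k+1+1) :=
          Nat.choose_succ_succ' _ _
        have q2 : (k+M+1).choose (M+1) = (k+M).choose M + (k+M).choose (M+1) :=
          Nat.choose_succ_succ' _ _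
        omega
      · -- M = k : the bound M+1 is inactive
        have hMk' : M = k := by omega
        subst hMk'
        have hset : DS (M+1) (M+1) = DS M (M+1) := by
          ext f
          constructor
          · rintro ⟨h1, h2, h3, h4⟩
            refine ⟨h1, h2, fun i hi => ?_, h4⟩
            have := h2 i hi
            omega
          · rintro ⟨h1, h2, h3, h4⟩
            exact ⟨h1, h2, fun i hi => by have := h3 i hi; omega, h4⟩
        have i1 := ihM (by omega)
        rw [show M + 1 + M - 1 = 2*M by omega] at i1
        rw [hset, show M + 1 + (M+1) - 1 = 2*M + 1 by omega]
        have q1 : (2*M+1).choose (M+1+1) = (2*M).choose (M+1) + (2*M).choose (M+1+1) :=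
          Nat.choose_succ_succ' _ _
        have q2 : (2*M+1).choose (M+1) = (2*M).choose M + (2*M).choose (M+1) :=
          Nat.choose_succ_succ' _ _
        omega


def Shape (n t m : ℕ) (e : ℕ → ℕ) : Prop :=
  e 0 = 0 ∧ (∀ i, n < i → e i = 0) ∧
  (∀ i, 1 ≤ i → i ≤ m + t + 1 → e i < i) ∧
  (∀ i j, 1 ≤ i → i ≤ j → j ≤ m + t + 1 → e i ≤ e j) ∧
  e (m + t + 1) = m ∧
  (∀ i j, m + t + 1 < i → i ≤ j → j ≤ n → e j ≤ e i) ∧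
  (∀ i, m + t + 1 < i → i ≤ n → e i < m)

lemma shape_iff (n t m : ℕ) (hm1 : 1 ≤ m) (hpn : m + t + 1 ≤ n) (e : ℕ → ℕ) :
    (IsInvSeq n e ∧ ¬ Contains n Pat102 e ∧ ¬ Contains n Pat201 e ∧
      ¬ Contains n Pat101 e ∧ HasRank n e t ∧ IsMaxVal n e m) ↔ Shape n t m e := by
  constructor
  · rintro ⟨⟨he0, hlt, hzero⟩, h102, h201, h101, ⟨q, ⟨hq1, hq2, hmono, hdesc⟩, hrank⟩,
      ⟨hbd, i0, hi01, hi02, hi0v⟩⟩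
    have mono : ∀ i j, 1 ≤ i → i ≤ j → j ≤ q → e i ≤ e j := by
      have key : ∀ d i, 1 ≤ i → i + d ≤ q → e i ≤ e (i + d) := by
        intro d
        induction d with
        | zero => intro i _ _; simp
        | succ d ih =>
          intro i h1 h2
          calc e i ≤ e (i + d) := ih i h1 (by omega)
            _ ≤ e (i + d + 1) := hmono (i + d) (by omega) (by omega)
      intro i j h1 h2 h3
      have := key (j - i) i h1 (by omega)
      rwa [show i + (j - i) = j by omega] at this
    have hmaxq : ∀ i, 1 ≤ i → i ≤ n → e i ≤ e q := by
      intro i h1 h2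
      rcases le_or_gt i q with hc | hc
      · exact mono i q h1 hc le_rfl
      · have hqn : q ≠ n := by omega
        have hd : e (q + 1) < e q := hdesc.resolve_left hqn
        by_contra hcon
        push_neg at hcon
        rcases eq_or_lt_of_le (show q + 1 ≤ i by omega) with h' | h'
        · rw [← h'] at hcon; omega
        · exact h102 ⟨q, q + 1, i, hq1, by omega, h', h2, hd, hcon⟩
    have heq : e q = m := le_antisymm (hbd q hq1 hq2) (hi0v ▸ hmaxq i0 hi01 hi02)
    have hqp : q = m + t + 1 := by omega
    subst hqp
    have anti : ∀ i j, m + t + 1 < i → i ≤ j → j ≤ n → e j ≤ e i := by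
      intro i j hqi hij hjn
      rcases eq_or_lt_of_le hij with rfl | hlt'
      · exact le_rfl
      · by_contra hcon
        push_neg at hcon
        have hejm : e j ≤ m := hbd j (by omega) hjn
        rcases eq_or_lt_of_le hejm with hejm' | hejm'
        · exact h101 ⟨m + t + 1, i, j, hq1, hqi, hlt', hjn, heq.trans hejm'.symm,
            by rw [heq]; omega⟩
        · exact h201 ⟨m + t + 1, i, j, hq1, hqi, hlt', hjn, hcon, by rw [heq]; omega⟩
    refine ⟨he0, hzero, fun i h1 h2 => hlt i h1 (by omega), fun i j h1 h2 h3 => mono i j h1 h2 h3,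
      heq, anti, ?_⟩
    intro i h1 h2
    have hqn : m + t + 1 ≠ n := by omega
    have hd : e (m + t + 1 + 1) < e (m + t + 1) := hdesc.resolve_left hqn
    rw [show m + t + 1 + 1 = m + t + 2 by omega] at hd
    have := anti (m + t + 2) i (by omega) (by omega) h2
    omega
  · rintro ⟨s0, sz, sst, smono, sm, santi, slt⟩
    have hinv : IsInvSeq n e := by
      refine ⟨s0, fun i h1 h2 => ?_, sz⟩
      rcases le_or_gt i (m + t + 1) with hc | hc
      · exact sst i h1 hc
      · have := slt i hc h2
        omega
    refine ⟨hinv, ?_, ?_, ?_, ?_, ?_⟩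
    · rintro ⟨i, j, k, hi, hij, hjk, hkn, hba, hac⟩
      rcases le_or_gt j (m + t + 1) with hc | hc
      · have := smono i j hi (le_of_lt hij) hc
        omega
      · have := santi j k hc (le_of_lt hjk) hkn
        omega
    · rintro ⟨i, j, k, hi, hij, hjk, hkn, hbc, hca⟩
      rcases le_or_gt j (m + t + 1) with hc | hc
      · have := smono i j hi (le_of_lt hij) hc
        omega
      · have := santi j k hc (le_of_lt hjk) hkn
        omega
    · rintro ⟨i, j, k, hi, hij, hjk, hkn, hac, hba⟩
      rcases le_or_gt j (m + t + 1) with hc | hc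
      · have := smono i j hi (le_of_lt hij) hc
        omega
      · have := santi j k hc (le_of_lt hjk) hkn
        omega
    · refine ⟨m + t + 1, ⟨by omega, hpn, fun i h1 h2 => smono i (i + 1) h1 (by omega) (by omega),
        ?_⟩, by rw [sm]⟩
      by_cases hq : m + t + 1 = n
      · exact Or.inl hq
      · refine Or.inr ?_
        have := slt (m + t + 2) (by omega) (by omega)
        rw [show m + t + 1 + 1 = m + t + 2 by omega, sm]
        omega
    · refine ⟨fun i h1 h2 => ?_, m + t + 1, by omega, hpn, sm⟩
      rcases le_or_gt i (m + t + 1) with hc | hc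
      · have := smono i (m + t + 1) h1 hc le_rfl
        omega
      · have := slt i hc h2
        omega


lemma shape_ncard (n t m : ℕ) (hm1 : 1 ≤ m) (hpn : m + t + 1 ≤ n) :
    {e : ℕ → ℕ | Shape n t m e}.ncard =
      (DS m (m + t)).ncard * (ES (m - 1) (n - (m + t + 1))).ncard := by
  classical
  set L := n - (m + t + 1) with hL
  set Ψ : (ℕ → ℕ) → (ℕ → ℕ) × (ℕ → ℕ) :=
    fun e => (fun i => if i < m + t then e (i + 1) else 0,
              fun j => if j < L then e (m + t + 2 + j) else 0) with hΨ
  have himg : Ψ '' {e | Shape n t m e} = (DS m (m + t)) ×ˢ (ES (m - 1) L) := by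
    ext x
    constructor
    · rintro ⟨e, ⟨s0, sz, sst, smono, sm, santi, slt⟩, rfl⟩
      rw [Set.mem_prod]
      constructor
      · refine ⟨?_, ?_, ?_, ?_⟩
        · intro i j hij hj
          simp only [hΨ]
          rw [if_pos (by omega), if_pos hj]
          exact smono (i + 1) (j + 1) (by omega) (by omega) (by omega)
        · intro i hi
          simp only [hΨ]
          rw [if_pos hi]
          have := sst (i + 1) (by omega) (by omega)
          omega
        · intro i hi
          simp only [hΨ]
          rw [if_pos hi]
          have := smono (i + 1) (m + t + 1) (by omega) (by omega) le_rfl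
          omega
        · intro i hi
          simp only [hΨ]
          rw [if_neg (by omega)]
      · refine ⟨?_, ?_, ?_⟩
        · intro i j hij hj
          simp only [hΨ]
          rw [if_pos hj, if_pos (show i < L by omega)]
          exact santi (m + t + 2 + i) (m + t + 2 + j) (by omega) (by omega) (by omega)
        · intro i hi
          simp only [hΨ]
          rw [if_pos hi]
          have := slt (m + t + 2 + i) (by omega) (by omega)
          omega
        · intro i hi
          simp only [hΨ]
          rw [if_neg (by omega)]
    · rintro hx
      rw [Set.mem_prod] at hx
      obtain ⟨⟨f1, f2, f3, f4⟩, ⟨g1, g2, g3⟩⟩ := hx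
      set f := x.1 with hf
      set g := x.2 with hg
      set e : ℕ → ℕ := fun i =>
        if i = 0 then 0 else if i ≤ m + t then f (i - 1)
        else if i = m + t + 1 then m else if i ≤ n then g (i - (m + t + 2)) else 0 with hedef
      have E1 : ∀ i, 1 ≤ i → i ≤ m + t → e i = f (i - 1) := by
        intro i h1 h2
        rw [hedef]
        dsimp only
        rw [if_neg (by omega), if_pos h2]
      have E2 : e (m + t + 1) = m := by
        rw [hedef]
        dsimp only
        rw [if_neg (by omega), if_neg (by omega), if_pos rfl]
      have E3 : ∀ i, m + t + 1 < i → i ≤ n → e i = g (i - (m + t + 2)) := by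
        intro i h1 h2
        rw [hedef]
        dsimp only
        rw [if_neg (by omega), if_neg (by omega), if_neg (by omega), if_pos h2]
      have E4 : ∀ i, n < i → e i = 0 := by
        intro i h1
        rw [hedef]
        dsimp only
        rw [if_neg (by omega), if_neg (by omega), if_neg (by omega), if_neg (by omega)]
      have E0 : e 0 = 0 := by
        rw [hedef]
        dsimp only
        rw [if_pos rfl]
      refine ⟨e, ⟨E0, E4, ?_, ?_, E2, ?_, ?_⟩, ?_⟩
      · -- staircase
        intro i h1 h2
        rcases le_or_gt i (m + t) with hc | hc
        · rw [E1 i h1 hc]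
          have := f2 (i - 1) (by omega)
          omega
        · have hi : i = m + t + 1 := by omega
          rw [hi, E2]
          omega
      · -- prefix monotone
        intro i j h1 h2 h3
        rcases le_or_gt j (m + t) with hc | hc
        · rw [E1 i h1 (by omega), E1 j (by omega) hc]
          exact f1 (i - 1) (j - 1) (by omega) (by omega)
        · have hj : j = m + t + 1 := by omega
          rw [hj, E2]
          rcases le_or_gt i (m + t) with hc' | hc'
          · rw [E1 i h1 hc']
            exact f3 (i - 1) (by omega)
          · have hi : i = m + t + 1 := by omega
            rw [hi, E2]
      · -- suffix antitone
        intro i j h1 h2 h3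
        rw [E3 i h1 (by omega), E3 j (by omega) h3]
        exact g1 (i - (m + t + 2)) (j - (m + t + 2)) (by omega) (by omega)
      · -- suffix < m
        intro i h1 h2
        rw [E3 i h1 h2]
        have := g2 (i - (m + t + 2)) (by omega)
        omega
      · -- Ψ e = x
        rw [hΨ]
        dsimp only
        rw [Prod.ext_iff]
        constructor
        · funext i
          dsimp only
          by_cases hi : i < m + t
          · rw [if_pos hi, E1 (i + 1) (by omega) (by omega),
              show i + 1 - 1 = i by omega, hf]
          · rw [if_neg hi, ← hf, f4 i (by omega)]
        · funext j
          dsimp only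
          by_cases hj : j < L
          · rw [if_pos hj, E3 (m + t + 2 + j) (by omega) (by omega),
              show m + t + 2 + j - (m + t + 2) = j by omega, hg]
          · rw [if_neg hj, ← hg, g3 j (by omega)]
  have hinj : Set.InjOn Ψ {e | Shape n t m e} := by
    rintro e ⟨s0, sz, sst, smono, sm, santi, slt⟩ e' ⟨s0', sz', sst', smono', sm', santi', slt'⟩ h
    rw [hΨ, Prod.ext_iff] at h
    obtain ⟨h1, h2⟩ := h
    funext i
    rcases Nat.eq_zero_or_pos i with rfl | hi0
    · rw [s0, s0']
    rcases le_or_gt i (m + t) with hc1 | hc1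
    · have := congrFun h1 (i - 1)
      dsimp only at this
      rw [if_pos (by omega), if_pos (by omega), show i - 1 + 1 = i by omega] at this
      exact this
    rcases eq_or_lt_of_le (show m + t + 1 ≤ i by omega) with hc2 | hc2
    · rw [← hc2, sm, sm']
    rcases le_or_gt i n with hc3 | hc3
    · have := congrFun h2 (i - (m + t + 2))
      dsimp only at this
      rw [if_pos (by omega), if_pos (by omega),
        show m + t + 2 + (i - (m + t + 2)) = i by omega] at this
      exact this
    · rw [sz i hc3, sz' i hc3]
  rw [← Set.ncard_image_of_injOn hinj, himg, ← Nat.card_coe_set_eq,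
    Nat.card_congr (Equiv.Set.prod _ _), Nat.card_prod,
    Nat.card_coe_set_eq, Nat.card_coe_set_eq]


end Stmt12Aux

theorem stmt12 (n t m : ℕ) (hn : 1 ≤ n) (ht : t ≤ n - 2) (hm1 : 1 ≤ m)
    (hm2 : m ≤ n - t - 1) :
    (m + t + 1) *
      {e : ℕ → ℕ | IsInvSeq n e ∧ ¬ Contains n Pat102 e ∧ ¬ Contains n Pat201 e ∧
        ¬ Contains n Pat101 e ∧ HasRank n e t ∧ IsMaxVal n e m}.ncard =
    (t + 1) * Nat.choose (2 * m + t) m * Nat.choose (n - t - 2) (m - 1) := by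
  have hpn : m + t + 1 ≤ n := by omega
  have hSeq : {e : ℕ → ℕ | IsInvSeq n e ∧ ¬ Contains n Pat102 e ∧ ¬ Contains n Pat201 e ∧
      ¬ Contains n Pat101 e ∧ HasRank n e t ∧ IsMaxVal n e m} =
      {e : ℕ → ℕ | Stmt12Aux.Shape n t m e} :=
    Set.ext fun e => Stmt12Aux.shape_iff n t m hm1 hpn e
  rw [hSeq, Stmt12Aux.shape_ncard n t m hm1 hpn, Stmt12Aux.ES_card]
  set D := (Stmt12Aux.DS m (m + t)).ncard with hDdef
  rw [show (n - (m + t + 1)) + (m - 1) = n - t - 2 by omega]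
  have hsym : (n - t - 2).choose (n - (m + t + 1)) = (n - t - 2).choose (m - 1) := by
    rw [← Nat.choose_symm (show m - 1 ≤ n - t - 2 by omega),
      show n - t - 2 - (m - 1) = n - (m + t + 1) by omega]
  rw [hsym]
  have hDS := Stmt12Aux.DS_card (m + t) m (by omega)
  rw [show m + t + m - 1 = 2 * m + t - 1 by omega] at hDS
  rw [← hDdef] at hDS
  have h1 : D + (2 * m + t).choose (m - 1) = (2 * m + t).choose m := by
    rcases Nat.lt_or_ge m 2 with hm | hm
    · have hm' : m = 1 := by omega
      subst hm'
      rw [show 2 * 1 + t - 1 = t + 1 by omega] at hDS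
      have z : (t + 1).choose (1 + t + 1) = 0 := Nat.choose_eq_zero_of_lt (by omega)
      have o : (t + 1).choose 1 = t + 1 := Nat.choose_one_right _
      have g1 : (2 * 1 + t).choose (1 - 1) = 1 := Nat.choose_zero_right _
      have g2 : (2 * 1 + t).choose 1 = 2 * 1 + t := Nat.choose_one_right _
      omega
    · have hsymm : (2 * m + t - 1).choose (m + t + 1) = (2 * m + t - 1).choose (m - 2) := by
        rw [← Nat.choose_symm (show m + t + 1 ≤ 2 * m + t - 1 by omega),
          show 2 * m + t - 1 - (m + t + 1) = m - 2 by omega]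
      have pas1 := Nat.choose_succ_succ' (2 * m + t - 1) (m - 1)
      rw [show 2 * m + t - 1 + 1 = 2 * m + t by omega, show m - 1 + 1 = m by omega] at pas1
      have pas2 := Nat.choose_succ_succ' (2 * m + t - 1) (m - 2)
      rw [show 2 * m + t - 1 + 1 = 2 * m + t by omega, show m - 2 + 1 = m - 1 by omega] at pas2
      omega
  have hch := Nat.choose_succ_right_eq (2 * m + t) (m - 1)
  rw [show m - 1 + 1 = m by omega, show 2 * m + t - (m - 1) = m + t + 1 by omega] at hch
  have key : (m + t + 1) * D = (t + 1) * (2 * m + t).choose m := by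
    have hstep : (m + t + 1) * D + m * ((2 * m + t).choose m) =
        (m + t + 1) * ((2 * m + t).choose m) := by
      calc (m + t + 1) * D + m * ((2 * m + t).choose m)
          = (m + t + 1) * D + ((2 * m + t).choose m) * m := by ring
        _ = (m + t + 1) * D + ((2 * m + t).choose (m - 1)) * (m + t + 1) := by rw [hch]
        _ = (m + t + 1) * (D + (2 * m + t).choose (m - 1)) := by ring
        _ = (m + t + 1) * ((2 * m + t).choose m) := by rw [h1]
    have hsplit2 : (m + t + 1) * ((2 * m + t).choose m) =
        (t + 1) * ((2 * m + t).choose m) + m * ((2 * m + t).choose m) := by ring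
    exact Nat.add_right_cancel (hstep.trans hsplit2)
  rw [← mul_assoc, key]
end

section
/- An inversion sequence e of length n avoids all three patterns 102, 201, and 101 if and only if e is unimodal with a unique-position peak in the following sense: there is an index p with e_1 ≤ e_2 ≤ ... ≤ e_p = max(e) > e_{p+1} ≥ e_{p+2} ≥ ... ≥ e_n. -/
lemma chain_mono (e : ℕ → ℕ) (p : ℕ) (h : ∀ i, 1 ≤ i → i < p → e i ≤ e (i + 1)) :
    ∀ j, j ≤ p → ∀ i, 1 ≤ i → i ≤ j → e i ≤ e j := by
  intro j
  induction j with
  | zero => intro _ i hi hij; omega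
  | succ j ih =>
    intro hjp i hi hij
    rcases Nat.eq_or_lt_of_le hij with h1 | h1
    · rw [h1]
    · exact le_trans (ih (by omega) i hi (by omega)) (h j (by omega) (by omega))

lemma chain_anti (e : ℕ → ℕ) (p n : ℕ) (h : ∀ i, p ≤ i → i < n → e (i + 1) ≤ e i) :
    ∀ k, k ≤ n → ∀ j, p ≤ j → j ≤ k → e k ≤ e j := by
  intro k
  induction k with
  | zero =>
    intro _ j _ hjk
    have hj0 : j = 0 := by omega
    subst hj0
    exact le_refl _
  | succ k ih =>
    intro hk j hj hjk
    rcases Nat.eq_or_lt_of_le hjk with h1 | h1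
    · rw [← h1]
    · exact le_trans (h k (by omega) (by omega)) (ih (by omega) j hj (by omega))

theorem stmt13 (n : ℕ) (hn : 1 ≤ n) (e : ℕ → ℕ) (he : IsInvSeq n e) :
    (¬ Contains n Pat102 e ∧ ¬ Contains n Pat201 e ∧ ¬ Contains n Pat101 e) ↔
      ∃ p, 1 ≤ p ∧ p ≤ n ∧ (∀ i, 1 ≤ i → i < p → e i ≤ e (i + 1)) ∧
        (∀ i, 1 ≤ i → i ≤ n → e i ≤ e p) ∧
        (p < n → e (p + 1) < e p) ∧
        (∀ i, p < i → i < n → e (i + 1) ≤ e i) := by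
  obtain ⟨he0, helt, hegt⟩ := he
  constructor
  · rintro ⟨h102, h201, h101⟩
    have key : ∀ i j k, 1 ≤ i → i < j → j < k → k ≤ n → e j < e i → ¬ e j < e k := by
      intro i j k hi hij hjk hkn h1 h2
      rcases lt_trichotomy (e i) (e k) with h | h | h
      · exact h102 ⟨i, j, k, hi, hij, hjk, hkn, h1, h⟩
      · exact h101 ⟨i, j, k, hi, hij, hjk, hkn, h, h1⟩
      · exact h201 ⟨i, j, k, hi, hij, hjk, hkn, h2, h⟩
    have hne : (Finset.Icc 1 n).Nonempty := ⟨1, by simp [hn]⟩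
    obtain ⟨a, ha, hma⟩ := Finset.exists_mem_eq_sup (Finset.Icc 1 n) hne e
    simp only [Finset.mem_Icc] at ha
    set m := (Finset.Icc 1 n).sup e with hm
    have hle : ∀ i, 1 ≤ i → i ≤ n → e i ≤ m := fun i h1 h2 =>
      Finset.le_sup (Finset.mem_Icc.mpr ⟨h1, h2⟩)
    set p := Nat.findGreatest (fun i => m ≤ e i) n with hp
    have hap : a ≤ p := Nat.le_findGreatest ha.2 (le_of_eq hma)
    have hp1 : 1 ≤ p := le_trans ha.1 hap
    have hpn : p ≤ n := Nat.findGreatest_le n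
    have hPp : m ≤ e p := by
      have := Nat.findGreatest_spec (P := fun i => m ≤ e i) ha.2 (le_of_eq hma)
      exact this
    have epm : e p = m := le_antisymm (hle p hp1 hpn) hPp
    have hafter : ∀ q, p < q → q ≤ n → e q < m := by
      intro q h1 h2
      have := Nat.findGreatest_is_greatest (P := fun i => m ≤ e i) h1 h2
      omega
    refine ⟨p, hp1, hpn, ?_, ?_, ?_, ?_⟩
    · intro i h1 h2
      by_contra hcon
      push_neg at hcon
      rcases Nat.eq_or_lt_of_le (show i + 1 ≤ p by omega) with h3 | h3
      · have := hle i h1 (by omega)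
        rw [h3, epm] at hcon
        omega
      · exact key i (i + 1) p h1 (by omega) h3 hpn hcon
          (by have := hle i h1 (by omega); omega)
    · intro i h1 h2
      rw [epm]; exact hle i h1 h2
    · intro h1
      have := hafter (p + 1) (by omega) (by omega)
      omega
    · intro i h1 h2
      by_contra hcon
      push_neg at hcon
      have hei : e i < m := lt_of_lt_of_le hcon (hle (i + 1) (by omega) (by omega))
      exact key p i (i + 1) hp1 h1 (by omega) (by omega) (by omega) hcon
  · rintro ⟨p, hp1, hpn, hinc, hmax, hstrict, hdec⟩
    have step_anti : ∀ i, p ≤ i → i < n → e (i + 1) ≤ e i := by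
      intro i h1 h2
      rcases Nat.eq_or_lt_of_le h1 with h3 | h3
      · rw [← h3]; exact le_of_lt (hstrict (by omega))
      · exact hdec i h3 h2
    have genkey : ∀ i j k, 1 ≤ i → i < j → j < k → k ≤ n → e j < e i → e j < e k → False := by
      intro i j k hi hij hjk hkn h1 h2
      rcases lt_or_ge j p with h | h
      · have := chain_mono e p hinc j (by omega) i hi (by omega)
        omega
      · have := chain_anti e p n step_anti k hkn j h (by omega)
        omega
    refine ⟨?_, ?_, ?_⟩
    · rintro ⟨i, j, k, hi, hij, hjk, hkn, hb, hc⟩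
      exact genkey i j k hi hij hjk hkn hb (lt_trans hb hc)
    · rintro ⟨i, j, k, hi, hij, hjk, hkn, hb, hc⟩
      exact genkey i j k hi hij hjk hkn (lt_trans hb hc) hb
    · rintro ⟨i, j, k, hi, hij, hjk, hkn, hb, hc⟩
      exact genkey i j k hi hij hjk hkn hc (hb ▸ hc)
end

section
/- Let E(y) be the formal power series with E(0) = 0 satisfying E(y) = y/(1 - E(y))^2. Then for integers n ≥ 1 and t ≥ 0 with t+1 ≤ n, the coefficient of y^n in E(y)^{t+1} equals ((t+1)/n) · C(3n-t-2, n-t-1). -/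
section
open Nat PowerSeries

noncomputable def val16 (k n : ℕ) : ℚ :=
  if k = 0 then (if n = 0 then 1 else 0)
  else if k ≤ n then ((k : ℚ) / (n : ℚ)) * ((3*n - k - 1).choose (n - k) : ℚ)
  else 0

lemma val16_diag (m : ℕ) : val16 m m = 1 := by
  rcases Nat.eq_zero_or_pos m with h | h
  · simp [val16, h]
  · have h1 : (m : ℚ) ≠ 0 := by positivity
    simp only [val16, if_neg (by omega : ¬ m = 0), if_pos le_rfl, Nat.sub_self,
      Nat.choose_zero_right, Nat.cast_one, mul_one, div_self h1]

lemma val16_subdiag (m : ℕ) (hm : 1 ≤ m) : val16 (m - 1) m = 2 * ((m : ℚ) - 1) := by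
  rcases Nat.lt_or_ge m 2 with h | h
  · interval_cases m <;> simp [val16]
  · obtain ⟨p, rfl⟩ : ∃ p, m = p + 2 := ⟨m - 2, by omega⟩
    simp only [val16, if_neg (by omega : ¬ p + 2 - 1 = 0), if_pos (by omega : p + 2 - 1 ≤ p + 2)]
    rw [show 3*(p+2) - (p+2-1) - 1 = 2*(p+2) by omega, show p + 2 - (p+2-1) = 1 by omega,
      Nat.choose_one_right]
    have h1 : ((p:ℚ)+2) ≠ 0 := by positivity
    push_cast
    field_simp
    ring

lemma val16_big (k n : ℕ) (h : n < k) : val16 k n = 0 := by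
  simp only [val16, if_neg (by omega : ¬ k = 0), if_neg (by omega : ¬ k ≤ n)]

-- the core binomial identity
lemma keyid16 (j q : ℕ) :
    ((j+1 : ℚ)/(j+q+3)) * ((2*j+3*q+7).choose (q+2) : ℚ)
      = ((j:ℚ)/(j+q+2)) * ((2*j+3*q+5).choose (q+2) : ℚ)
        + 2*((j+2:ℚ)/(j+q+3)) * ((2*j+3*q+6).choose (q+1) : ℚ)
        - ((j+3:ℚ)/(j+q+3)) * ((2*j+3*q+5).choose q : ℚ) := by
  have h1 : ((2*j+3*q+7).choose (q+2) : ℚ) = (2*j+3*q+7) ! / ((q+2) ! * (2*j+2*q+5) !) := by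
    rw [Nat.cast_choose ℚ (by omega), show 2*j+3*q+7 - (q+2) = 2*j+2*q+5 by omega]
  have h2 : ((2*j+3*q+5).choose (q+2) : ℚ) = (2*j+3*q+5) ! / ((q+2) ! * (2*j+2*q+3) !) := by
    rw [Nat.cast_choose ℚ (by omega), show 2*j+3*q+5 - (q+2) = 2*j+2*q+3 by omega]
  have h3 : ((2*j+3*q+6).choose (q+1) : ℚ) = (2*j+3*q+6) ! / ((q+1) ! * (2*j+2*q+5) !) := by
    rw [Nat.cast_choose ℚ (by omega), show 2*j+3*q+6 - (q+1) = 2*j+2*q+5 by omega]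
  have h4 : ((2*j+3*q+5).choose q : ℚ) = (2*j+3*q+5) ! / (q ! * (2*j+2*q+5) !) := by
    rw [Nat.cast_choose ℚ (by omega), show 2*j+3*q+5 - q = 2*j+2*q+5 by omega]
  have e1 : ((2*j+3*q+7) ! : ℚ) = (2*j+3*q+7) * (2*j+3*q+6) * (2*j+3*q+5) ! := by
    rw [show 2*j+3*q+7 = (2*j+3*q+5)+1+1 by ring]
    push_cast [Nat.factorial_succ]; ring
  have e2 : ((2*j+3*q+6) ! : ℚ) = (2*j+3*q+6) * (2*j+3*q+5) ! := by
    rw [show 2*j+3*q+6 = (2*j+3*q+5)+1 by ring]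
    push_cast [Nat.factorial_succ]; ring
  have e3 : ((2*j+2*q+5) ! : ℚ) = (2*j+2*q+5) * (2*j+2*q+4) * (2*j+2*q+3) ! := by
    rw [show 2*j+2*q+5 = (2*j+2*q+3)+1+1 by ring]
    push_cast [Nat.factorial_succ]; ring
  have e4 : ((q+2) ! : ℚ) = (q+2) * (q+1) * q ! := by
    rw [show q+2 = q+1+1 by ring]; push_cast [Nat.factorial_succ]; ring
  have e5 : ((q+1) ! : ℚ) = (q+1) * q ! := by push_cast [Nat.factorial_succ]; ring
  rw [h1, h2, h3, h4, e1, e2, e3, e4, e5]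
  have nz1 : ((2*j+3*q+5) ! : ℚ) ≠ 0 := by positivity
  have nz2 : ((2*j+2*q+3) ! : ℚ) ≠ 0 := by positivity
  have nz3 : (q ! : ℚ) ≠ 0 := by positivity
  have nz4 : (j+q+3 : ℚ) ≠ 0 := by positivity
  have nz5 : (j+q+2 : ℚ) ≠ 0 := by positivity
  field_simp
  ring

lemma val16_rec (k n : ℕ) (hk : 1 ≤ k) (hkn : k ≤ n) :
    val16 k n = val16 (k-1) (n-1) + 2 * val16 (k+1) n - val16 (k+2) n := by
  rcases eq_or_lt_of_le hkn with rfl | h1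
  · rw [val16_diag, val16_big (k+1) k (by omega), val16_big (k+2) k (by omega)]
    rcases eq_or_lt_of_le hk with hk1 | hk1
    · subst hk1; norm_num [val16]
    · rw [val16_diag (k-1)]; ring
  rcases eq_or_lt_of_le (by omega : k + 1 ≤ n) with h2 | h2
  · -- k + 1 = n
    subst h2
    rw [val16_big (k+2) (k+1) (by omega), val16_diag (k+1)]
    have L := val16_subdiag (k+1) (by omega)
    have R := val16_subdiag k hk
    simp only [Nat.add_sub_cancel] at L ⊢
    rw [L, R]
    push_cast
    ring
  · -- k + 2 ≤ n
    obtain ⟨j, rfl⟩ : ∃ j, k = j + 1 := ⟨k - 1, by omega⟩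
    obtain ⟨q, rfl⟩ : ∃ q, n = j + q + 3 := ⟨n - j - 3, by omega⟩
    have hA : val16 (j+1) (j+q+3) = ((j+1 : ℚ)/(j+q+3)) * ((2*j+3*q+7).choose (q+2) : ℚ) := by
      simp only [val16, if_neg (by omega : ¬ j+1 = 0), if_pos (by omega : j+1 ≤ j+q+3)]
      rw [show 3*(j+q+3) - (j+1) - 1 = 2*j+3*q+7 by omega, show j+q+3 - (j+1) = q+2 by omega]
      push_cast; ring
    have hB : val16 (j+1-1) (j+q+3-1) = ((j:ℚ)/(j+q+2)) * ((2*j+3*q+5).choose (q+2) : ℚ) := by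
      rcases Nat.eq_zero_or_pos j with rfl | hj
      · simp [val16]
      · simp only [val16, show j+1-1 = j from rfl, show j+q+3-1 = j+q+2 by omega,
          if_neg (by omega : ¬ j = 0), if_pos (by omega : j ≤ j+q+2)]
        rw [show 3*(j+q+2) - j - 1 = 2*j+3*q+5 by omega, show j+q+2 - j = q+2 by omega]
        push_cast; ring
    have hC : val16 (j+1+1) (j+q+3) = ((j+2 : ℚ)/(j+q+3)) * ((2*j+3*q+6).choose (q+1) : ℚ) := by
      simp only [val16, if_neg (by omega : ¬ j+1+1 = 0), if_pos (by omega : j+1+1 ≤ j+q+3)]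
      rw [show 3*(j+q+3) - (j+1+1) - 1 = 2*j+3*q+6 by omega, show j+q+3 - (j+1+1) = q+1 by omega]
      push_cast; ring
    have hD : val16 (j+1+2) (j+q+3) = ((j+3 : ℚ)/(j+q+3)) * ((2*j+3*q+5).choose q : ℚ) := by
      simp only [val16, if_neg (by omega : ¬ j+1+2 = 0), if_pos (by omega : j+1+2 ≤ j+q+3)]
      rw [show 3*(j+q+3) - (j+1+2) - 1 = 2*j+3*q+5 by omega, show j+q+3 - (j+1+2) = q by omega]
      push_cast; ring
    rw [hA, hB, hC, hD]
    have h := keyid16 j q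
    push_cast at h ⊢
    linear_combination h

theorem stmt16 (E : PowerSeries ℚ) (h0 : constantCoeff E = 0)
    (hE : E = PowerSeries.X * ((1 - E)⁻¹) ^ 2)
    (n t : ℕ) (hn : 1 ≤ n) (ht : t + 1 ≤ n) :
    PowerSeries.coeff n (E ^ (t + 1)) =
      ((t + 1 : ℚ) / (n : ℚ)) * (Nat.choose (3 * n - t - 2) (n - t - 1) : ℚ) := by
  have hc : constantCoeff (1 - E) ≠ 0 := by simp [h0]
  have hinv : (1 - E) * (1 - E)⁻¹ = 1 := PowerSeries.mul_inv_cancel _ hc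
  have key : E * (1 - E)^2 = X := by
    calc E * (1-E)^2 = (X * ((1-E)⁻¹)^2) * (1-E)^2 := by rw [← hE]
      _ = X * ((1-E) * (1-E)⁻¹)^2 := by ring
      _ = X := by rw [hinv]; ring
  have ordE : ∀ k m : ℕ, m < k → coeff m (E^k) = 0 := by
    intro k m hm
    have hdvd : (X : ℚ⟦X⟧)^k ∣ E^k := pow_dvd_pow_of_dvd ⟨((1 - E)⁻¹) ^ 2, hE⟩ k
    exact PowerSeries.X_pow_dvd_iff.mp hdvd m hm
  have main : ∀ N k m : ℕ, 2*m ≤ k + N → coeff m (E^k) = val16 k m := by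
    intro N
    induction N with
    | zero =>
      intro k m hN
      rcases Nat.eq_zero_or_pos k with rfl | hk
      · simp [val16, PowerSeries.coeff_one]
      rcases Nat.lt_or_ge m k with h | h
      · rw [ordE k m h, val16_big k m h]
      · omega
    | succ N ih =>
      intro k m hN
      rcases Nat.eq_zero_or_pos k with rfl | hk
      · simp [val16, PowerSeries.coeff_one]
      rcases Nat.lt_or_ge m k with h | h
      · rw [ordE k m h, val16_big k m h]
      obtain ⟨a, rfl⟩ : ∃ a, k = a + 1 := ⟨k - 1, by omega⟩
      obtain ⟨p, rfl⟩ : ∃ p, m = p + 1 := ⟨m - 1, by omega⟩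
      have hid : E^(a+1) + E^(a+3) = X*E^a + (E^(a+2) + E^(a+2)) := by
        have h2 : E^(a+1) * (1-E)^2 = X*E^a := by
          calc E^(a+1)*(1-E)^2 = (E*(1-E)^2)*E^a := by ring
            _ = X*E^a := by rw [key]
        linear_combination h2
      have hcoeff := congrArg (coeff (p+1)) hid
      simp only [map_add, coeff_succ_X_mul] at hcoeff
      rw [ih a p (by omega), ih (a+2) (p+1) (by omega), ih (a+3) (p+1) (by omega)] at hcoeff
      have hrec := val16_rec (a+1) (p+1) (by omega) (by omega)
      simp only [Nat.add_sub_cancel] at hrec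
      rw [show a+1+1 = a+2 from rfl, show a+1+2 = a+3 from rfl] at hrec
      rw [hrec]
      linarith
  rw [main (2*n) (t+1) n (by omega)]
  simp only [val16, if_neg (by omega : ¬ t + 1 = 0), if_pos ht]
  rw [show 3*n - (t+1) - 1 = 3*n - t - 2 by omega, show n - (t+1) = n - t - 1 by omega]
  push_cast
  ring

end
end

section
/- Let D(x) be the formal power series with D(0) = 0 satisfying D = x(1+D)^2 + x^2(1+D)^3 D / (1 - x(1+D)^2). Then D satisfies the polynomial equation D = (x - x^2)(1+D)^3. -/
open PowerSeries

theorem stmt17 (D : PowerSeries ℚ) (h0 : constantCoeff D = 0)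
    (hD : D = PowerSeries.X * (1 + D) ^ 2 +
      PowerSeries.X ^ 2 * (1 + D) ^ 3 * D * (1 - PowerSeries.X * (1 + D) ^ 2)⁻¹) :
    D = (PowerSeries.X - PowerSeries.X ^ 2) * (1 + D) ^ 3 := by
  set U : PowerSeries ℚ := 1 - PowerSeries.X * (1 + D) ^ 2 with hU
  have hc : constantCoeff U ≠ 0 := by
    simp [hU]
  have hinv : U⁻¹ * U = 1 := PowerSeries.inv_mul_cancel U hc
  have key : D * U = PowerSeries.X * (1 + D) ^ 2 * U +
      PowerSeries.X ^ 2 * (1 + D) ^ 3 * D := by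
    calc D * U = (PowerSeries.X * (1 + D) ^ 2 +
        PowerSeries.X ^ 2 * (1 + D) ^ 3 * D * U⁻¹) * U := by rw [← hD]
      _ = PowerSeries.X * (1 + D) ^ 2 * U +
          PowerSeries.X ^ 2 * (1 + D) ^ 3 * D * (U⁻¹ * U) := by ring
      _ = _ := by rw [hinv, mul_one]
  linear_combination key
end
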